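/- Let A > 0, v > 0 and g ≥ 0 be real numbers. Then the real symmetric 3×3 matrix M with entries M₁₁ = (5/9)A·v^{−11/3}, M₁₂ = M₂₁ = −(1/3)A·v^{−8/3}, M₁₃ = M₃₁ = 0, M₂₂ = (1/2)A·v^{−5/3}, M₂₃ = M₃₂ = (1/2)A·v^{−2/3} / √((5/3)A·v^{4/3} + v·g), M₃₃ = v^{−1} is positive definite; indeed its leading principal minors satisfy Δ₁ = (5/9)A·v^{−11/3} > 0, Δ₂ = (1/6)A²·v^{−16/3} > 0, and Δ₃ = (1/6)A²·v^{−19/3} − (5/36)A³·v^{−5}/((5/3)A·v^{4/3} + v·g) > 0. -/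

import Mathlib

set_option maxHeartbeats 1000000

lemma quad_pos (a b d e f x0 x1 x2 : ℝ) (ha : 0 < a)
    (h2 : 0 < a * d - b ^ 2) (h3 : 0 < (a * d - b ^ 2) * f - a * e ^ 2)
    (hx : x0 ≠ 0 ∨ x1 ≠ 0 ∨ x2 ≠ 0) :
    0 < a * x0 ^ 2 + 2 * b * x0 * x1 + d * x1 ^ 2 + 2 * e * x1 * x2 + f * x2 ^ 2 := by
  rcases eq_or_ne x2 0 with rfl | h2z
  · rcases eq_or_ne x1 0 with rfl | h1z
    · have h0 : x0 ≠ 0 := by tauto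
      have : 0 < x0 ^ 2 := by positivity
      nlinarith
    · have : 0 < x1 ^ 2 := by positivity
      nlinarith [sq_nonneg (a * x0 + b * x1), mul_pos h2 this]
  · have : 0 < x2 ^ 2 := by positivity
    nlinarith [sq_nonneg (a * x0 + b * x1), sq_nonneg ((a * d - b ^ 2) * x1 + a * e * x2),
      mul_pos h3 this, mul_pos ha h2]

lemma det3_form (a b d e f : ℝ) :
    Matrix.det !![a,b,0;b,d,e;0,e,f] = (a*d - b^2)*f - a*e^2 := by
  rw [Matrix.det_fin_three]
  simp
  ring

lemma dot_form (a b d e f : ℝ) (x : Fin 3 → ℝ) :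
    dotProduct (star x) (Matrix.mulVec !![a,b,0;b,d,e;0,e,f] x) =
      a * (x 0)^2 + 2*b*(x 0)*(x 1) + d*(x 1)^2 + 2*e*(x 1)*(x 2) + f*(x 2)^2 := by
  simp [Matrix.mulVec, dotProduct, Fin.sum_univ_three]
  ring

/-- **Positive definiteness of the energy matrix.**
For `A > 0`, `v > 0`, `g ≥ 0`, the symmetric matrix `M` arising in the zero-order
energy estimate is positive definite, and its leading principal minors are
`Δ₁ = (5/9)Av^{−11/3} > 0`, `Δ₂ = (1/6)A²v^{−16/3} > 0`, and
`Δ₃ = (1/6)A²v^{−19/3} − (5/36)A³v^{−5}/((5/3)Av^{4/3}+vg) > 0`. -/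
theorem energy_matrix_posdef (A v g : ℝ) (hA : 0 < A) (hv : 0 < v) (hg : 0 ≤ g)
    (M : Matrix (Fin 3) (Fin 3) ℝ)
    (hM : M = !![(5/9) * A * v ^ (-(11:ℝ)/3), -(1/3) * A * v ^ (-(8:ℝ)/3), 0;
                 -(1/3) * A * v ^ (-(8:ℝ)/3), (1/2) * A * v ^ (-(5:ℝ)/3),
                   (1/2) * A * v ^ (-(2:ℝ)/3) /
                     Real.sqrt ((5/3) * A * v ^ ((4:ℝ)/3) + v * g);
                 0, (1/2) * A * v ^ (-(2:ℝ)/3) /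
                     Real.sqrt ((5/3) * A * v ^ ((4:ℝ)/3) + v * g), v⁻¹]) :
    M.PosDef ∧
    M 0 0 = (5/9) * A * v ^ (-(11:ℝ)/3) ∧ 0 < M 0 0 ∧
    Matrix.det !![M 0 0, M 0 1; M 1 0, M 1 1] = (1/6) * A ^ 2 * v ^ (-(16:ℝ)/3) ∧
    0 < Matrix.det !![M 0 0, M 0 1; M 1 0, M 1 1] ∧
    M.det = (1/6) * A ^ 2 * v ^ (-(19:ℝ)/3) -
      (5/36) * A ^ 3 * v ^ (-(5:ℝ)) / ((5/3) * A * v ^ ((4:ℝ)/3) + v * g) ∧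
    0 < M.det := by
  obtain ⟨u, hu_def⟩ : ∃ u : ℝ, u = v ^ ((1:ℝ)/3) := ⟨_, rfl⟩
  have hu : 0 < u := hu_def ▸ Real.rpow_pos_of_pos hv _
  have hpow : ∀ k : ℕ, v ^ ((k : ℝ)/3) = u ^ k := by
    intro k
    rw [hu_def, ← Real.rpow_natCast (v ^ ((1:ℝ)/3)) k, ← Real.rpow_mul hv.le]
    ring_nf
  have hpowneg : ∀ k : ℕ, v ^ (-(k : ℝ)/3) = (u ^ k)⁻¹ := by
    intro k
    rw [neg_div, Real.rpow_neg hv.le, hpow]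
  have e11 : v ^ (-(11:ℝ)/3) = (u ^ 11)⁻¹ := by simpa using hpowneg 11
  have e8 : v ^ (-(8:ℝ)/3) = (u ^ 8)⁻¹ := by simpa using hpowneg 8
  have e5 : v ^ (-(5:ℝ)/3) = (u ^ 5)⁻¹ := by simpa using hpowneg 5
  have e2 : v ^ (-(2:ℝ)/3) = (u ^ 2)⁻¹ := by simpa using hpowneg 2
  have e4 : v ^ ((4:ℝ)/3) = u ^ 4 := by simpa using hpow 4
  have e16 : v ^ (-(16:ℝ)/3) = (u ^ 16)⁻¹ := by simpa using hpowneg 16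
  have e19 : v ^ (-(19:ℝ)/3) = (u ^ 19)⁻¹ := by simpa using hpowneg 19
  have e15 : v ^ (-(5:ℝ)) = (u ^ 15)⁻¹ := by
    have h5 : (-(5:ℝ)) = -(15:ℝ)/3 := by norm_num
    rw [h5]; simpa using hpowneg 15
  have hv3 : v = u ^ 3 := by
    have h3 := hpow 3
    rw [← h3]
    norm_num
  -- the square root argument
  obtain ⟨s, hs_def⟩ : ∃ s : ℝ, s = (5/3) * A * v ^ ((4:ℝ)/3) + v * g := ⟨_, rfl⟩
  rw [← hs_def] at hM
  have hs_eq : s = (5/3) * A * u ^ 4 + v * g := by rw [hs_def, e4]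
  have hs : 0 < s := by
    rw [hs_eq]
    have h1 : (0:ℝ) < (5/3) * A * u ^ 4 := by positivity
    have h2 : (0:ℝ) ≤ v * g := mul_nonneg hv.le hg
    linarith
  obtain ⟨r, hr_def⟩ : ∃ r : ℝ, r = Real.sqrt s := ⟨_, rfl⟩
  rw [← hr_def] at hM
  have hr : 0 < r := hr_def ▸ Real.sqrt_pos.mpr hs
  have hr2 : r ^ 2 = s := hr_def ▸ Real.sq_sqrt hs.le
  have hune : u ≠ 0 := hu.ne'
  have hsne : s ≠ 0 := hs.ne'
  have hrne : r ≠ 0 := hr.ne'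
  -- entries in u-form
  have ha : (0:ℝ) < (5/9) * A * (u ^ 11)⁻¹ := by positivity
  have hMu : M = !![(5/9) * A * (u ^ 11)⁻¹, -(1/3) * A * (u ^ 8)⁻¹, 0;
                    -(1/3) * A * (u ^ 8)⁻¹, (1/2) * A * (u ^ 5)⁻¹, (1/2) * A * (u ^ 2)⁻¹ / r;
                    0, (1/2) * A * (u ^ 2)⁻¹ / r, (u ^ 3)⁻¹] := by
    rw [hM, e11, e8, e5, e2, hv3]
  have hesq : ((1/2) * A * (u ^ 2)⁻¹ / r) ^ 2 = (1/4) * A ^ 2 * (u ^ 4)⁻¹ / s := by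
    rw [div_pow, hr2]
    congr 1
    field_simp
    ring
  have hΔ2 : (5/9) * A * (u ^ 11)⁻¹ * ((1/2) * A * (u ^ 5)⁻¹) - (-(1/3) * A * (u ^ 8)⁻¹) ^ 2
      = (1/6) * A ^ 2 * (u ^ 16)⁻¹ := by
    field_simp
    ring
  have hΔ2pos : (0:ℝ) < (1/6) * A ^ 2 * (u ^ 16)⁻¹ := by positivity
  have hΔ3 : (1/6) * A ^ 2 * (u ^ 16)⁻¹ * (u ^ 3)⁻¹
      - (5/9) * A * (u ^ 11)⁻¹ * ((1/4) * A ^ 2 * (u ^ 4)⁻¹ / s)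
      = (1/6) * A ^ 2 * (u ^ 19)⁻¹ - (5/36) * A ^ 3 * (u ^ 15)⁻¹ / s := by
    field_simp
    ring
  have hΔ3pos : (0:ℝ) < (1/6) * A ^ 2 * (u ^ 19)⁻¹ - (5/36) * A ^ 3 * (u ^ 15)⁻¹ / s := by
    have hrewrite : (1/6) * A ^ 2 * (u ^ 19)⁻¹ - (5/36) * A ^ 3 * (u ^ 15)⁻¹ / s
        = ((1/6) * A ^ 2 * s - (5/36) * A ^ 3 * u ^ 4) / (u ^ 19 * s) := by
      field_simp
    rw [hrewrite]
    apply div_pos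
    · rw [hs_eq]
      have h2 : (0:ℝ) ≤ v * g := mul_nonneg hv.le hg
      have h3 : (0:ℝ) < A ^ 3 * u ^ 4 := by positivity
      have h4 : (0:ℝ) ≤ A ^ 2 * (v * g) := by positivity
      nlinarith
    · positivity
  -- minors
  have hM00 : M 0 0 = (5/9) * A * v ^ (-(11:ℝ)/3) := by rw [hM]; simp
  have hM01 : M 0 1 = -(1/3) * A * v ^ (-(8:ℝ)/3) := by rw [hM]; simp
  have hM10 : M 1 0 = -(1/3) * A * v ^ (-(8:ℝ)/3) := by rw [hM]; simp
  have hM11 : M 1 1 = (1/2) * A * v ^ (-(5:ℝ)/3) := by rw [hM]; simp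
  have hdet2 : Matrix.det !![M 0 0, M 0 1; M 1 0, M 1 1] = (1/6) * A ^ 2 * v ^ (-(16:ℝ)/3) := by
    rw [Matrix.det_fin_two_of, hM00, hM01, hM10, hM11, e11, e8, e5, e16, ← hΔ2]
    ring
  have hdet3u : M.det = (1/6) * A ^ 2 * (u ^ 19)⁻¹ - (5/36) * A ^ 3 * (u ^ 15)⁻¹ / s := by
    have expand : M.det =
        ((5/9) * A * (u ^ 11)⁻¹ * ((1/2) * A * (u ^ 5)⁻¹) - (-(1/3) * A * (u ^ 8)⁻¹) ^ 2)
          * (u ^ 3)⁻¹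
        - (5/9) * A * (u ^ 11)⁻¹ * ((1/2) * A * (u ^ 2)⁻¹ / r) ^ 2 := by
      rw [hMu, det3_form]
    rw [expand, hesq, hΔ2, hΔ3]
  have hdet3 : M.det = (1/6) * A ^ 2 * v ^ (-(19:ℝ)/3) -
      (5/36) * A ^ 3 * v ^ (-(5:ℝ)) / ((5/3) * A * v ^ ((4:ℝ)/3) + v * g) := by
    rw [hdet3u, e19, e15, hs_def]
  refine ⟨?_, hM00, ?_, hdet2, ?_, hdet3, ?_⟩
  · refine Matrix.PosDef.of_dotProduct_mulVec_pos ?_ ?_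
    · rw [hM]
      ext i j
      fin_cases i <;> fin_cases j <;>
        simp [Matrix.conjTranspose_apply]
    · intro x hx
      have hx' : x 0 ≠ 0 ∨ x 1 ≠ 0 ∨ x 2 ≠ 0 := by
        by_contra h
        push_neg at h
        exact hx (by ext i; fin_cases i <;> simp [h.1, h.2.1, h.2.2])
      have hform : dotProduct (star x) (Matrix.mulVec M x) =
          (5/9) * A * (u ^ 11)⁻¹ * (x 0) ^ 2
          + 2 * (-(1/3) * A * (u ^ 8)⁻¹) * (x 0) * (x 1)
          + (1/2) * A * (u ^ 5)⁻¹ * (x 1) ^ 2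
          + 2 * ((1/2) * A * (u ^ 2)⁻¹ / r) * (x 1) * (x 2)
          + (u ^ 3)⁻¹ * (x 2) ^ 2 := by
        rw [hMu, dot_form]
      rw [hform]
      exact quad_pos _ _ _ _ _ _ _ _ ha (by rw [hΔ2]; exact hΔ2pos)
        (by rw [hΔ2, hesq, hΔ3]; exact hΔ3pos) hx'
  · rw [hM00, e11]; positivity
  · rw [hdet2, e16]; positivity
  · rw [hdet3u]; exact hΔ3pos
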